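/- Let ℓ ≥ 1, k ≥ 0, 1 ≤ p ≤ ℓ, and let μ = (c_1, ..., c_n) be integers with ℓ ≥ c_1 ≥ c_2 ≥ ... ≥ c_n ≥ 0, Σ_{i=1}^n c_i = 2(kℓ + p), and Σ_{i=2k+2}^n c_i = p. Let T be the unique semistandard Young tableau of shape ϱ = (ℓ^{2k}, p, p) with content μ. Then: (a) for every column j with 1 ≤ j ≤ p, T(i, j) = i for all 1 ≤ i ≤ 2k+1, and T(2k+2, j) ≥ 2k+2; (b) for every column j with p < j ≤ ℓ, the 2k entries T(1, j), ..., T(2k, j) are 2k distinct elements of {1, 2, ..., 2k+1} (i.e., exactly one element of {1, ..., 2k+1} is missing from column j). -/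

import Mathlib

/-- `IsSSYT R C r n c T` : the filling `T` (entry `T a b` in row `a`, column `b`,
both 1-indexed) is a semistandard Young tableau of the shape whose `a`-th row
(for `1 ≤ a ≤ R`) consists of the boxes `(a, b)` with `1 ≤ b ≤ r a` (where
`r a ≤ C`), with entries in `{1, ..., n}`, rows weakly increasing, columns
strictly increasing, and using exactly `c i` entries equal to `i` for each
`1 ≤ i ≤ n`. -/
def IsSSYT (R C : ℕ) (r : ℕ → ℕ) (n : ℕ) (c : ℕ → ℕ) (T : ℕ → ℕ → ℕ) : Prop :=
  (∀ a ∈ Finset.Icc 1 R, ∀ b ∈ Finset.Icc 1 (r a), 1 ≤ T a b ∧ T a b ≤ n) ∧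
  (∀ a ∈ Finset.Icc 1 R, ∀ b b' : ℕ, 1 ≤ b → b ≤ b' → b' ≤ r a → T a b ≤ T a b') ∧
  (∀ a : ℕ, 1 ≤ a → a + 1 ≤ R → ∀ b : ℕ, 1 ≤ b → b ≤ r a → b ≤ r (a + 1) →
    T a b < T (a + 1) b) ∧
  (∀ i : ℕ, 1 ≤ i → i ≤ n →
    ((Finset.Icc 1 R ×ˢ Finset.Icc 1 C).filter
      (fun q => q.2 ≤ r q.1 ∧ T q.1 q.2 = i)).card = c i)

/-- Row lengths of the shape `ϱ = (ℓ^{2k}, p, p)`: rows `1, ..., 2k` have length `ℓ`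
and rows `2k+1`, `2k+2` have length `p`. -/
def rhoRow (l k p : ℕ) (a : ℕ) : ℕ := if a ≤ 2 * k then l else p

/-- A semistandard Young tableau of shape `ϱ = (ℓ^{2k}, p, p)` with content
`(c 1, ..., c n)`. -/
def IsRhoSSYT (l k p n : ℕ) (c : ℕ → ℕ) (T : ℕ → ℕ → ℕ) : Prop :=
  IsSSYT (2 * k + 2) l (rhoRow l k p) n c T

/-- A tableau of shape `ϱ = (ℓ^{2k}, p, p)` is proper if `T (q+2) 1 ≥ T q ℓ`
for all `1 ≤ q ≤ 2k`. -/
def IsProper (l k : ℕ) (T : ℕ → ℕ → ℕ) : Prop :=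
  ∀ q : ℕ, 1 ≤ q → q ≤ 2 * k → T q l ≤ T (q + 2) 1

/-- Two fillings agree on every box of the shape with row lengths `r` and `R` rows. -/
def EqOnShape (R : ℕ) (r : ℕ → ℕ) (T T' : ℕ → ℕ → ℕ) : Prop :=
  ∀ a ∈ Finset.Icc 1 R, ∀ b ∈ Finset.Icc 1 (r a), T a b = T' a b

/-- The content `(c 1, ..., c n)` is `ℓ`-maximal if at least `n - 3` of the
amounts `c i` equal `ℓ`. -/
def IsMaximal (l n : ℕ) (c : ℕ → ℕ) : Prop :=
  n - 3 ≤ ((Finset.Icc 1 n).filter (fun i => c i = l)).card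

/-- A filling is normalized if it vanishes outside the boxes of the shape. -/
def Normalized (R : ℕ) (r : ℕ → ℕ) (T : ℕ → ℕ → ℕ) : Prop :=
  ∀ a b : ℕ, ¬ (1 ≤ a ∧ a ≤ R ∧ 1 ≤ b ∧ b ≤ r a) → T a b = 0
/-- Column description of the unique tableau of shape `ϱ = (ℓ^{2k}, p, p)` when
`Λ = p`: columns `j ≤ p` contain `1, 2, ..., 2k+1` followed by an entry `≥ 2k+2`,
and columns `p < j ≤ ℓ` contain `2k` distinct elements of `{1, ..., 2k+1}`. -/
theorem stmt11 (l k p n : ℕ) (c : ℕ → ℕ) (T : ℕ → ℕ → ℕ)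
    (hl : 1 ≤ l) (hp : 1 ≤ p) (hpl : p ≤ l)
    (hbd : ∀ i : ℕ, 1 ≤ i → i ≤ n → c i ≤ l)
    (hmono : ∀ i j : ℕ, 1 ≤ i → i ≤ j → j ≤ n → c j ≤ c i)
    (hsum : ∑ i ∈ Finset.Icc 1 n, c i = 2 * (k * l + p))
    (hlam : ∑ i ∈ Finset.Icc (2 * k + 2) n, c i = p)
    (hT : IsRhoSSYT l k p n c T) :
    (∀ j : ℕ, 1 ≤ j → j ≤ p →
      (∀ i : ℕ, 1 ≤ i → i ≤ 2 * k + 1 → T i j = i) ∧ 2 * k + 2 ≤ T (2 * k + 2) j) ∧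
    (∀ j : ℕ, p < j → j ≤ l →
      (∀ a : ℕ, 1 ≤ a → a ≤ 2 * k → 1 ≤ T a j ∧ T a j ≤ 2 * k + 1) ∧
      (∀ a a' : ℕ, 1 ≤ a → a ≤ 2 * k → 1 ≤ a' → a' ≤ 2 * k →
        T a j = T a' j → a = a')) := by
  obtain ⟨hbound, hrow, hcol, hcount⟩ := hT
  set r := rhoRow l k p with hr
  have hrle : ∀ a a' : ℕ, a ≤ a' → r a' ≤ r a := by
    intro a a' h
    rw [hr]; unfold rhoRow
    split <;> split <;> omega
  have key : ∀ d a b : ℕ, 1 ≤ a → a + d ≤ 2 * k + 2 → 1 ≤ b → b ≤ r (a + d) →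
      T a b + d ≤ T (a + d) b := by
    intro d
    induction d with
    | zero => intro a b _ _ _ _; simp
    | succ d ih =>
      intro a b ha hle hb hbr
      have h1 : b ≤ r (a + d) := le_trans hbr (hrle _ _ (by omega))
      have h2 := ih a b ha (by omega) hb h1
      have h3 := hcol (a + d) (by omega) (by omega) b hb h1 hbr
      show T a b + (d + 1) ≤ T (a + d + 1) b
      omega
  have Tge : ∀ a b : ℕ, 1 ≤ a → a ≤ 2 * k + 2 → 1 ≤ b → b ≤ r a → a ≤ T a b := by
    intro a b ha ha' hb hbr
    have h1 : b ≤ r 1 := le_trans hbr (hrle _ _ ha)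
    have h2 := (hbound 1 (Finset.mem_Icc.mpr ⟨le_rfl, by omega⟩) b
      (Finset.mem_Icc.mpr ⟨hb, h1⟩)).1
    have h3 := key (a - 1) 1 b le_rfl (by omega) hb (by
      have e : 1 + (a - 1) = a := by omega
      rw [e]; exact hbr)
    have e : 1 + (a - 1) = a := by omega
    rw [e] at h3
    omega
  have hn : 2 * k + 2 ≤ n := by
    by_contra h
    rw [Finset.Icc_eq_empty (by omega), Finset.sum_empty] at hlam
    omega
  have hrp : r (2 * k + 2) = p := by
    rw [hr]; unfold rhoRow; rw [if_neg (by omega)]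
  set A := ((Finset.Icc 1 (2 * k + 2)) ×ˢ Finset.Icc 1 l).filter
      (fun q => q.2 ≤ r q.1 ∧ 2 * k + 2 ≤ T q.1 q.2) with hA
  have cardA : A.card = p := by
    have h1 : A.card = ∑ i ∈ Finset.Icc (2 * k + 2) n,
        (A.filter (fun q => T q.1 q.2 = i)).card := by
      apply Finset.card_eq_sum_card_fiberwise
      intro q (hq : q ∈ A)
      simp only [hA, Finset.mem_filter, Finset.mem_product, Finset.mem_Icc] at hq
      obtain ⟨⟨⟨hq1, hq2⟩, hq3, hq4⟩, hq5, hq6⟩ := hq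
      have := (hbound q.1 (Finset.mem_Icc.mpr ⟨hq1, hq2⟩) q.2
        (Finset.mem_Icc.mpr ⟨hq3, hq5⟩)).2
      exact Finset.mem_Icc.mpr ⟨hq6, this⟩
    rw [h1, ← hlam]
    apply Finset.sum_congr rfl
    intro i hi
    rw [Finset.mem_Icc] at hi
    obtain ⟨hi1, hi2⟩ := hi
    rw [← hcount i (by omega) hi2]
    congr 1
    ext q
    simp only [hA, Finset.mem_filter, Finset.mem_product, Finset.mem_Icc]
    omega
  have hBA : ({2 * k + 2} : Finset ℕ) ×ˢ Finset.Icc 1 p ⊆ A := by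
    intro q hq
    simp only [Finset.mem_product, Finset.mem_singleton, Finset.mem_Icc] at hq
    obtain ⟨hq1, hq2, hq3⟩ := hq
    simp only [hA, Finset.mem_filter, Finset.mem_product, Finset.mem_Icc]
    refine ⟨⟨⟨by omega, by omega⟩, hq2, by omega⟩, ?_, ?_⟩
    · rw [hq1, hrp]; exact hq3
    · have := Tge q.1 q.2 (by omega) (by omega) hq2 (by rw [hq1, hrp]; exact hq3)
      omega
  have hBcard : (({2 * k + 2} : Finset ℕ) ×ˢ Finset.Icc 1 p).card = p := by
    rw [Finset.card_product]; simp
  have hAB : A = ({2 * k + 2} : Finset ℕ) ×ˢ Finset.Icc 1 p :=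
    (Finset.eq_of_subset_of_card_le hBA (by rw [cardA, hBcard])).symm
  have notrow : ∀ a b : ℕ, 1 ≤ a → a ≤ 2 * k + 1 → 1 ≤ b → b ≤ r a →
      T a b ≤ 2 * k + 1 := by
    intro a b ha ha' hb hbr
    by_contra h
    have hbl : b ≤ l := le_trans hbr (by rw [hr]; unfold rhoRow; split <;> omega)
    have hmem : (a, b) ∈ A := by
      simp only [hA, Finset.mem_filter, Finset.mem_product, Finset.mem_Icc]
      exact ⟨⟨⟨ha, by omega⟩, hb, hbl⟩, hbr, by omega⟩
    rw [hAB] at hmem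
    simp only [Finset.mem_product, Finset.mem_singleton, Finset.mem_Icc] at hmem
    omega
  constructor
  · intro j hj1 hjp
    have hjr : ∀ a : ℕ, j ≤ r a := by
      intro a; rw [hr]; unfold rhoRow; split <;> omega
    constructor
    · intro i hi1 hi2
      have hge := Tge i j hi1 (by omega) hj1 (hjr i)
      have h1 := key (2 * k + 1 - i) i j hi1 (by omega) hj1 (by
        have e : i + (2 * k + 1 - i) = 2 * k + 1 := by omega
        rw [e]; exact hjr _)
      have e : i + (2 * k + 1 - i) = 2 * k + 1 := by omega
      rw [e] at h1
      have h2 := notrow (2 * k + 1) j (by omega) le_rfl hj1 (hjr _)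
      omega
    · exact Tge (2 * k + 2) j (by omega) le_rfl hj1 (hjr _)
  · intro j hpj hjl
    have hjr : ∀ a : ℕ, a ≤ 2 * k → j ≤ r a := by
      intro a ha; rw [hr]; unfold rhoRow; split <;> omega
    constructor
    · intro a ha1 ha2
      refine ⟨(hbound a (Finset.mem_Icc.mpr ⟨ha1, by omega⟩) j
        (Finset.mem_Icc.mpr ⟨by omega, hjr a ha2⟩)).1, ?_⟩
      exact notrow a j ha1 (by omega) (by omega) (hjr a ha2)
    · intro a a' ha1 ha2 ha1' ha2' heq
      by_contra hne
      rcases Nat.lt_or_ge a a' with h | h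
      · have hk := key (a' - a) a j ha1 (by omega) (by omega) (by
          have e : a + (a' - a) = a' := by omega
          rw [e]; exact hjr a' ha2')
        have e : a + (a' - a) = a' := by omega
        rw [e] at hk
        omega
      · have hk := key (a - a') a' j ha1' (by omega) (by omega) (by
          have e : a' + (a - a') = a := by omega
          rw [e]; exact hjr a ha2)
        have e : a' + (a - a') = a := by omega
        rw [e] at hk
        omega
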